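/- Under the second-order self-bounding assumption, fix w0 ∈ E and set L1(w0) = max{1, ρ0(F(w0)+1), ρ0(F(w0))·ρ0(F(w0)+1), ρ1(F(w0)+1)}. Let u0 ∈ E satisfy F(u0) ≤ F(w0), let 0 ≤ η ≤ 1/L1(w0), and define u_{t+1} = u_t − η·∇F(u_t). Then F(u_t) ≤ F(u_0) for every natural number t. -/

import Mathlib

/-- `θ(x) = ∫₀ˣ 1/ρ1(v) dv`. -/
noncomputable def sbTheta (ρ1 : ℝ → ℝ) (x : ℝ) : ℝ := ∫ v in (0 : ℝ)..x, 1 / ρ1 v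

/-- `ρ0(x) = ρ1(x)·√(2 θ(x))`. -/
noncomputable def sbRho0 (ρ1 : ℝ → ℝ) (x : ℝ) : ℝ := ρ1 x * Real.sqrt (2 * sbTheta ρ1 x)

set_option maxHeartbeats 1000000 in
/-- Under the second-order self-bounding assumption, gradient descent started in the
`F(w0)`-sublevel set with step size at most `1/L1(w0)` never increases `F`. -/
theorem gd_no_increase_of_selfbounding (d : ℕ) (hd : 1 ≤ d)
    (F : EuclideanSpace ℝ (Fin d) → ℝ)
    (hF : ContDiff ℝ 2 F) (hFnn : ∀ w, 0 ≤ F w)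
    (ρ1 : ℝ → ℝ) (hρ1mono : MonotoneOn ρ1 (Set.Ici 0))
    (hρ1cont : ContinuousOn ρ1 (Set.Ici 0))
    (hρ1pos : ∀ x ∈ Set.Ici (0 : ℝ), 0 < ρ1 x)
    (hbound : ∀ w, ‖fderiv ℝ (fderiv ℝ F) w‖ ≤ ρ1 (F w))
    (w0 : EuclideanSpace ℝ (Fin d)) (L1w0 : ℝ)
    (hL1w0 : L1w0 = max (max 1 (sbRho0 ρ1 (F w0 + 1)))
      (max (sbRho0 ρ1 (F w0) * sbRho0 ρ1 (F w0 + 1)) (ρ1 (F w0 + 1))))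
    (u0 : EuclideanSpace ℝ (Fin d)) (hu0 : F u0 ≤ F w0)
    (η : ℝ) (hη0 : 0 ≤ η) (hη1 : η ≤ 1 / L1w0)
    (u : ℕ → EuclideanSpace ℝ (Fin d)) (hu0' : u 0 = u0)
    (hrec : ∀ t, u (t + 1) = u t - η • gradient F (u t)) :
    ∀ t : ℕ, F (u t) ≤ F u0 := by
  have hFd : Differentiable ℝ F := hF.differentiable (by norm_num)
  have hF1 : ContDiff ℝ 1 (fderiv ℝ F) := hF.fderiv_right (le_refl 2)
  have hF1d : Differentiable ℝ (fderiv ℝ F) := hF1.differentiable one_ne_zero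
  set L : ℝ := ρ1 (F w0 + 1) with hLdef
  have hLpos : 0 < L := hρ1pos _ (by have := hFnn w0; simp [Set.mem_Ici]; linarith)
  have hL11 : (1:ℝ) ≤ L1w0 := by
    rw [hL1w0]; exact le_trans (le_max_left _ _) (le_max_left _ _)
  have hL1pos : 0 < L1w0 := lt_of_lt_of_le one_pos hL11
  have hLle : L ≤ L1w0 := by
    rw [hL1w0]; exact le_trans (le_max_right _ _) (le_max_right _ _)
  have hηL : η * L ≤ 1 := by
    have h1 : η * L1w0 ≤ 1 := by
      calc η * L1w0 ≤ (1 / L1w0) * L1w0 :=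
            mul_le_mul_of_nonneg_right hη1 (le_of_lt hL1pos)
        _ = 1 := by field_simp
    nlinarith
  have hHess : ∀ x : EuclideanSpace ℝ (Fin d), F x ≤ F w0 + 1 → ‖fderiv ℝ (fderiv ℝ F) x‖ ≤ L := by
    intro x hx
    refine le_trans (hbound x) ?_
    exact hρ1mono (hFnn x) (by have := hFnn w0; simp [Set.mem_Ici]; linarith) hx
  -- key step lemma
  have step : ∀ v : EuclideanSpace ℝ (Fin d), F v ≤ F w0 → F (v - η • gradient F v) ≤ F v := by
    intro v hv
    set gv : EuclideanSpace ℝ (Fin d) := gradient F v with hgvdef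
    set c : EuclideanSpace ℝ (Fin d) := -(η • gv) with hcdef
    set γ : ℝ → EuclideanSpace ℝ (Fin d) := fun r => v + r • c with hγdef
    set g : ℝ → ℝ := fun r => F (γ r) with hgdef
    have hγcont : Continuous γ := by continuity
    have hgcont : Continuous g := hFd.continuous.comp hγcont
    have hg0 : g 0 = F v := by simp [hgdef, hγdef]
    have hgderiv : ∀ r : ℝ, HasDerivAt g ((fderiv ℝ F (γ r)) c) r := by
      intro r
      have h1 : HasDerivAt γ c r := by
        have h2 := ((hasDerivAt_id r).smul_const c).const_add v; rw [one_smul] at h2; exact h2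
      exact (hFd (γ r)).hasFDerivAt.comp_hasDerivAt r h1
    -- inner product fact
    have hfd_inner : ∀ x : EuclideanSpace ℝ (Fin d), (fderiv ℝ F x) gv = inner ℝ (gradient F x) gv := by
      intro x
      rw [gradient]
      exact (InnerProductSpace.toDual_symm_apply).symm
    have hfdv : (fderiv ℝ F v) gv = ‖gv‖ ^ 2 := by
      rw [hfd_inner, ← hgvdef, real_inner_self_eq_norm_sq]
    -- key antitonicity
    have anti : ∀ b : ℝ, b ≤ 1 → (∀ r ∈ Set.Icc (0:ℝ) b, F (γ r) ≤ F w0 + 1) →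
        AntitoneOn g (Set.Icc 0 b) := by
      intro b hb1 hbd
      apply antitoneOn_of_deriv_nonpos (convex_Icc 0 b) hgcont.continuousOn
      · intro x _; exact (hgderiv x).differentiableAt.differentiableWithinAt
      · intro r hr
        rw [interior_Icc] at hr
        rw [(hgderiv r).deriv]
        have hr0 : 0 ≤ r := le_of_lt hr.1
        have hrb : r ≤ b := le_of_lt hr.2
        -- Lipschitz bound on the segment
        have hseg : ∀ x ∈ segment ℝ v (γ r), ‖fderiv ℝ (fderiv ℝ F) x‖ ≤ L := by
          intro x hx
          rw [segment_eq_image'] at hx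
          obtain ⟨θ, hθ, hxe⟩ := hx
          have : x = γ (θ * r) := by
            rw [← hxe]
            simp only [hγdef]
            rw [mul_smul]
            congr 1
            simp
          rw [this]
          apply hHess
          apply hbd
          constructor
          · exact mul_nonneg hθ.1 hr0
          · calc θ * r ≤ 1 * r := mul_le_mul_of_nonneg_right hθ.2 hr0
              _ = r := one_mul r
              _ ≤ b := hrb
        have hlip : ‖fderiv ℝ F (γ r) - fderiv ℝ F v‖ ≤ L * ‖γ r - v‖ := by
          apply (convex_segment v (γ r)).norm_image_sub_le_of_norm_fderiv_le
            (fun x _ => hF1d x) hseg (left_mem_segment ℝ v (γ r))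
            (right_mem_segment ℝ v (γ r))
        have hγrv : ‖γ r - v‖ = r * (η * ‖gv‖) := by
          simp only [hγdef]
          rw [add_sub_cancel_left, hcdef, norm_smul, norm_neg, norm_smul]
          simp [abs_of_nonneg hr0, abs_of_nonneg hη0, mul_assoc]
        -- main inequality
        have hdiff : |(fderiv ℝ F (γ r) - fderiv ℝ F v) gv| ≤ L * (r * (η * ‖gv‖)) * ‖gv‖ := by
          calc |(fderiv ℝ F (γ r) - fderiv ℝ F v) gv|
              ≤ ‖fderiv ℝ F (γ r) - fderiv ℝ F v‖ * ‖gv‖ := by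
                exact (fderiv ℝ F (γ r) - fderiv ℝ F v).le_opNorm gv
            _ ≤ L * (r * (η * ‖gv‖)) * ‖gv‖ := by
                apply mul_le_mul_of_nonneg_right _ (norm_nonneg gv)
                rw [← hγrv]; exact hlip
        have hsub : (fderiv ℝ F (γ r) - fderiv ℝ F v) gv
            = (fderiv ℝ F (γ r)) gv - (fderiv ℝ F v) gv := rfl
        have hkey : 0 ≤ (fderiv ℝ F (γ r)) gv := by
          have h1 : (fderiv ℝ F v) gv - L * (r * (η * ‖gv‖)) * ‖gv‖ ≤ (fderiv ℝ F (γ r)) gv := by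
            have := abs_le.mp hdiff
            rw [hsub] at this
            linarith [this.1]
          rw [hfdv] at h1
          have hLrη : L * r * η ≤ 1 := by
            have h2 : L * r ≤ L := by nlinarith
            nlinarith
          nlinarith [sq_nonneg ‖gv‖, norm_nonneg gv]
        have : (fderiv ℝ F (γ r)) c = -(η * (fderiv ℝ F (γ r)) gv) := by
          rw [hcdef]; simp
        rw [this]
        simp only [neg_nonpos]
        exact mul_nonneg hη0 hkey
    -- bootstrap via sSup
    set S : Set ℝ := {b | b ∈ Set.Icc (0:ℝ) 1 ∧ ∀ r ∈ Set.Icc (0:ℝ) b, g r ≤ F w0} with hSdef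
    have h0S : (0:ℝ) ∈ S := by
      refine ⟨⟨le_refl 0, zero_le_one⟩, ?_⟩
      intro r hr
      have : r = 0 := le_antisymm hr.2 hr.1
      rw [this, hg0]; exact hv
    have hSne : S.Nonempty := ⟨0, h0S⟩
    have hSbdd : BddAbove S := ⟨1, fun x hx => hx.1.2⟩
    set b0 : ℝ := sSup S with hb0def
    have hb00 : 0 ≤ b0 := le_csSup hSbdd h0S
    have hb01 : b0 ≤ 1 := csSup_le hSne (fun x hx => hx.1.2)
    have hlt : ∀ r, 0 ≤ r → r < b0 → g r ≤ F w0 := by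
      intro r hr0 hrb
      obtain ⟨b, hbS, hrb'⟩ := exists_lt_of_lt_csSup hSne hrb
      exact hbS.2 r ⟨hr0, le_of_lt hrb'⟩
    have hgb0 : g b0 ≤ F w0 := by
      rcases eq_or_lt_of_le hb00 with h | h
      · rw [← h, hg0]; exact hv
      · have htend : Filter.Tendsto g (nhdsWithin b0 (Set.Iio b0)) (nhds (g b0)) :=
          (hgcont.continuousAt).continuousWithinAt.tendsto
        have hne : (nhdsWithin b0 (Set.Iio b0)).NeBot := by
          exact nhdsLT_neBot b0
        apply le_of_tendsto htend
        filter_upwards [Ioo_mem_nhdsLT_of_mem (Set.mem_Ioc.mpr ⟨h, le_refl b0⟩)] with x hx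
        exact hlt x (le_of_lt hx.1) hx.2
    have hIcc : ∀ r ∈ Set.Icc (0:ℝ) b0, g r ≤ F w0 := by
      intro r hr
      rcases eq_or_lt_of_le hr.2 with h | h
      · rw [h]; exact hgb0
      · exact hlt r hr.1 h
    -- show b0 = 1
    have hb0eq : b0 = 1 := by
      by_contra hne
      have hb0lt : b0 < 1 := lt_of_le_of_ne hb01 hne
      have hcont : ContinuousAt g b0 := hgcont.continuousAt
      obtain ⟨δ, hδpos, hδ⟩ := Metric.continuousAt_iff.mp hcont 1 one_pos
      set b' : ℝ := min 1 (b0 + δ/2) with hb'def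
      have hb'gt : b0 < b' := lt_min hb0lt (by linarith)
      have hb'1 : b' ≤ 1 := min_le_left _ _
      have hbd' : ∀ r ∈ Set.Icc (0:ℝ) b', F (γ r) ≤ F w0 + 1 := by
        intro r hr
        rcases le_or_gt r b0 with h | h
        · have := hIcc r ⟨hr.1, h⟩
          simp only [hgdef] at this
          linarith
        · have hd : dist r b0 < δ := by
            rw [Real.dist_eq, abs_of_pos (by linarith)]
            have : r ≤ b0 + δ/2 := le_trans hr.2 (min_le_right _ _)
            linarith
          have := hδ hd
          rw [Real.dist_eq] at this
          have h2 := abs_le.mp (le_of_lt this)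
          have : g r ≤ g b0 + 1 := by linarith [h2.1, h2.2]
          simp only [hgdef] at this ⊢
          linarith
      have hanti := anti b' hb'1 hbd'
      have hb'S : b' ∈ S := by
        refine ⟨⟨by linarith, hb'1⟩, ?_⟩
        intro r hr
        have := hanti (Set.mem_Icc.mpr ⟨le_refl 0, by linarith⟩) hr hr.1
        rw [hg0] at this
        linarith
      have := le_csSup hSbdd hb'S
      linarith
    -- conclude
    have hbd1 : ∀ r ∈ Set.Icc (0:ℝ) 1, F (γ r) ≤ F w0 + 1 := by
      intro r hr
      have := hIcc r (by rw [hb0eq]; exact hr)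
      simp only [hgdef] at this
      linarith
    have hanti := anti 1 (le_refl 1) hbd1
    have h1 := hanti (Set.mem_Icc.mpr ⟨le_refl 0, zero_le_one⟩)
      (Set.mem_Icc.mpr ⟨zero_le_one, le_refl 1⟩) zero_le_one
    rw [hg0] at h1
    have : γ 1 = v - η • gv := by
      simp [hγdef, hcdef, sub_eq_add_neg]
    simpa only [hgdef, this] using h1
  -- induction
  intro t
  induction t with
  | zero => rw [hu0']
  | succ n ih =>
    rw [hrec n]
    exact le_trans (step (u n) (le_trans ih hu0)) ih
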